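/- Let n ≥ 1, and for each i ∈ {1,…,n} let p_i ∈ (0,1) and y_i ∈ {0,1}, with ∑_{i=1}^n y_i < n. Define Q(Δ) = ∑_{i=1}^n ( log(Δ·p_i + 1 − p_i) − y_i·log Δ ) for Δ > 0, and suppose Δ₀ > 0 satisfies ∑_{i=1}^n Δ₀·p_i/(Δ₀·p_i + 1 − p_i) = ∑_{i=1}^n y_i. Then for every h > 0 there exists a unique Δ_thresh > Δ₀ such that Q(Δ_thresh) − Q(Δ₀) = h; moreover Q(Δ) − Q(Δ₀) > h for every Δ > Δ_thresh. -/

import Mathlib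

open Finset

/-- Deterministic core of Theorem 4: under the stationarity condition at
`Δ₀`, for every threshold `h > 0` there exists a unique `Δ_thresh > Δ₀`
with `Q(Δ_thresh) − Q(Δ₀) = h`; moreover `Q(Δ) − Q(Δ₀) > h` for every
`Δ > Δ_thresh`. -/
theorem stmt_18 (n : ℕ) (hn : 1 ≤ n) (p y : Fin n → ℝ)
    (hp : ∀ i, p i ∈ Set.Ioo (0 : ℝ) 1) (hy : ∀ i, y i = 0 ∨ y i = 1)
    (hyn : ∑ i, y i < n)
    (Q : ℝ → ℝ)
    (hQ : ∀ Δ, Q Δ = ∑ i, (Real.log (Δ * p i + 1 - p i)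
          - y i * Real.log Δ))
    (Δ₀ : ℝ) (hΔ₀ : 0 < Δ₀)
    (hstat : ∑ i, Δ₀ * p i / (Δ₀ * p i + 1 - p i) = ∑ i, y i)
    (h : ℝ) (hh : 0 < h) :
    ∃ Δthresh : ℝ, Δ₀ < Δthresh ∧ Q Δthresh - Q Δ₀ = h
      ∧ (∀ Δ' : ℝ, Δ₀ < Δ' → Q Δ' - Q Δ₀ = h → Δ' = Δthresh)
      ∧ ∀ Δ : ℝ, Δthresh < Δ → h < Q Δ - Q Δ₀ := by
  have hQ' : Q = fun Δ => ∑ i, (Real.log (Δ * p i + 1 - p i)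
      - y i * Real.log Δ) := funext hQ
  subst hQ'
  have hpos : ∀ (i : Fin n) (Δ : ℝ), 0 < Δ → 0 < Δ * p i + 1 - p i := by
    intro i Δ hΔ
    have h1 := (hp i).1
    have h2 := (hp i).2
    nlinarith
  -- derivative
  have hderiv : ∀ Δ : ℝ, 0 < Δ →
      HasDerivAt (fun Δ => ∑ i, (Real.log (Δ * p i + 1 - p i)
        - y i * Real.log Δ))
        (∑ i, (p i / (Δ * p i + 1 - p i) - y i / Δ)) Δ := by
    intro Δ hΔ
    apply HasDerivAt.fun_sum
    intro i _
    have h1 : HasDerivAt (fun Δ : ℝ => Δ * p i + 1 - p i) (p i) Δ := by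
      simpa using (((hasDerivAt_id Δ).mul_const (p i)).add_const 1).sub_const (p i)
    have h2 : HasDerivAt (fun Δ : ℝ => Real.log (Δ * p i + 1 - p i))
        (p i / (Δ * p i + 1 - p i)) Δ := by
      simpa [div_eq_mul_inv, mul_comm, Function.comp_def] using
        (Real.hasDerivAt_log (ne_of_gt (hpos i Δ hΔ))).comp Δ h1
    have h3 : HasDerivAt (fun Δ : ℝ => y i * Real.log Δ) (y i / Δ) Δ := by
      simpa [div_eq_mul_inv] using (Real.hasDerivAt_log (ne_of_gt hΔ)).const_mul (y i)
    exact h2.sub h3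
  -- strict positivity of the derivative past Δ₀
  have hderivpos : ∀ Δ : ℝ, Δ₀ < Δ →
      0 < ∑ i, (p i / (Δ * p i + 1 - p i) - y i / Δ) := by
    intro Δ hΔ
    have hΔ' : 0 < Δ := lt_trans hΔ₀ hΔ
    have key : ∑ i, Δ₀ * p i / (Δ₀ * p i + 1 - p i)
        < ∑ i, Δ * p i / (Δ * p i + 1 - p i) := by
      apply Finset.sum_lt_sum_of_nonempty
      · exact Finset.univ_nonempty_iff.mpr (Fin.pos_iff_nonempty.mp hn)
      · intro i _
        have h1 := (hp i).1
        have h2 := (hp i).2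
        have d0 := hpos i Δ₀ hΔ₀
        have d1 := hpos i Δ hΔ'
        rw [div_lt_div_iff₀ d0 d1]
        nlinarith [mul_pos (mul_pos (sub_pos.mpr hΔ) h1) (sub_pos.mpr h2)]
    have := hstat ▸ key
    have expand : ∑ i, (p i / (Δ * p i + 1 - p i) - y i / Δ)
        = (∑ i, Δ * p i / (Δ * p i + 1 - p i) - ∑ i, y i) / Δ := by
      rw [sub_div, Finset.sum_div, Finset.sum_div, ← Finset.sum_sub_distrib]
      apply Finset.sum_congr rfl
      intro i _
      have d1 := hpos i Δ hΔ'
      field_simp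
    rw [expand]
    exact div_pos (by linarith) hΔ'
  set f : ℝ → ℝ := fun Δ => ∑ i, (Real.log (Δ * p i + 1 - p i)
      - y i * Real.log Δ) with hf
  -- strict monotonicity on Ici Δ₀
  have hmono : StrictMonoOn f (Set.Ici Δ₀) := by
    apply strictMonoOn_of_deriv_pos (convex_Ici Δ₀)
    · intro x hx
      have hx' : 0 < x := lt_of_lt_of_le hΔ₀ hx
      exact (hderiv x hx').differentiableAt.continuousAt.continuousWithinAt
    · intro x hx
      rw [interior_Ici] at hx
      rw [(hderiv x (lt_trans hΔ₀ hx)).deriv]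
      exact hderivpos x hx
  -- unboundedness: pick M with f M - f Δ₀ > h
  have hS : (∑ i, y i) < n := hyn
  set c : ℝ := n - ∑ i, y i with hc
  have hcpos : 0 < c := by simp [hc]; linarith
  have hlb : ∀ Δ : ℝ, 1 ≤ Δ →
      c * Real.log Δ + ∑ i, Real.log (p i) ≤ f Δ := by
    intro Δ hΔ1
    have hΔ' : 0 < Δ := lt_of_lt_of_le one_pos hΔ1
    have hlogΔ : 0 ≤ Real.log Δ := Real.log_nonneg hΔ1
    have : ∀ i : Fin n, (1 - y i) * Real.log Δ + Real.log (p i)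
        ≤ Real.log (Δ * p i + 1 - p i) - y i * Real.log Δ := by
      intro i
      have h1 := (hp i).1
      have h2 := (hp i).2
      have hlog : Real.log Δ + Real.log (p i) ≤ Real.log (Δ * p i + 1 - p i) := by
        rw [← Real.log_mul (ne_of_gt hΔ') (ne_of_gt h1)]
        apply Real.log_le_log (by positivity)
        nlinarith
      linarith [hlog]
    calc c * Real.log Δ + ∑ i, Real.log (p i)
        = ∑ i, ((1 - y i) * Real.log Δ + Real.log (p i)) := by
          rw [Finset.sum_add_distrib, ← Finset.sum_mul]
          congr 2
          simp [hc, Finset.sum_sub_distrib]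
      _ ≤ ∑ i, (Real.log (Δ * p i + 1 - p i) - y i * Real.log Δ) :=
          Finset.sum_le_sum (fun i _ => this i)
  obtain ⟨M, hM1, hMΔ₀, hMbig⟩ : ∃ M : ℝ, 1 ≤ M ∧ Δ₀ < M ∧
      h + f Δ₀ < c * Real.log M + ∑ i, Real.log (p i) := by
    have htend : Filter.Tendsto (fun Δ => c * Real.log Δ + ∑ i, Real.log (p i))
        Filter.atTop Filter.atTop := by
      apply Filter.tendsto_atTop_add_const_right
      exact (Real.tendsto_log_atTop).const_mul_atTop hcpos
    have h1 := htend.eventually_gt_atTop (h + f Δ₀)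
    have h2 := Filter.eventually_gt_atTop (max 1 Δ₀)
    obtain ⟨M, hMa, hMb⟩ := (h1.and h2).exists
    exact ⟨M, le_of_lt (lt_of_le_of_lt (le_max_left _ _) hMb),
      lt_of_le_of_lt (le_max_right _ _) hMb, hMa⟩
  have hfM : h + f Δ₀ < f M := lt_of_lt_of_le hMbig (hlb M hM1)
  -- IVT on [Δ₀, M]
  have hcont : ContinuousOn f (Set.Icc Δ₀ M) := by
    intro x hx
    have hx' : 0 < x := lt_of_lt_of_le hΔ₀ hx.1
    exact (hderiv x hx').differentiableAt.continuousAt.continuousWithinAt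
  have hmem : f Δ₀ + h ∈ Set.Icc (f Δ₀) (f M) :=
    ⟨by linarith, by linarith⟩
  obtain ⟨Δt, hΔt, hΔteq⟩ := intermediate_value_Icc (le_of_lt hMΔ₀) hcont hmem
  have hΔtgt : Δ₀ < Δt := by
    rcases lt_or_eq_of_le hΔt.1 with h' | h'
    · exact h'
    · exfalso; rw [← h'] at hΔteq; linarith
  refine ⟨Δt, hΔtgt, by linarith, ?_, ?_⟩
  · intro Δ' hΔ' heq
    have h1 : f Δ' = f Δt := by linarith
    exact (hmono.injOn (le_of_lt hΔ') (le_of_lt hΔtgt)) h1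
  · intro Δ hΔ
    have := hmono (le_of_lt hΔtgt) (le_of_lt (lt_trans hΔtgt hΔ)) hΔ
    linarith
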